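/- For every GFG alternating automaton over finite words A with n states there exists a DFA with at most n states that is equivalent to A (recognizes L(A)). -/

import Mathlib

set_option maxHeartbeats 1000000

namespace GFG

/-- Positive boolean formulas over `Q`. -/
inductive PB (Q : Type) : Type
  | atom : Q → PB Q
  | and : PB Q → PB Q → PB Q
  | or : PB Q → PB Q → PB Q

namespace PB
variable {Q R : Type}

/-- Satisfaction of a positive boolean formula by a truth assignment. -/
def sat : PB Q → (Q → Prop) → Prop
  | atom q, v => v q
  | and b b', v => b.sat v ∧ b'.sat v
  | or b b', v => b.sat v ∨ b'.sat v

/-- Two positive boolean formulas are equivalent if they are satisfied by exactly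
the same truth assignments. -/
def Equiv (b b' : PB Q) : Prop := ∀ v : Q → Prop, b.sat v ↔ b'.sat v

/-- Dualization: swap conjunctions and disjunctions. -/
def dual : PB Q → PB Q
  | atom q => atom q
  | and b b' => or b.dual b'.dual
  | or b b' => and b.dual b'.dual

/-- The formula is a conjunction of atoms. -/
def IsConj : PB Q → Prop
  | atom _ => True
  | and b b' => b.IsConj ∧ b'.IsConj
  | or _ _ => False

/-- The formula is a disjunction of atoms. -/
def IsDisj : PB Q → Prop
  | atom _ => True
  | and _ _ => False
  | or b b' => b.IsDisj ∧ b'.IsDisj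

/-- The formula is a single atom. -/
def IsAtom : PB Q → Prop
  | atom _ => True
  | _ => False

/-- The formula is in disjunctive normal form: a disjunction of conjunctions of atoms. -/
def IsDNF : PB Q → Prop
  | atom _ => True
  | and b b' => b.IsConj ∧ b'.IsConj
  | or b b' => b.IsDNF ∧ b'.IsDNF

/-- The set of atoms occurring in a formula. -/
def atomsOf : PB Q → Set Q
  | atom q => {q}
  | and b b' => b.atomsOf ∪ b'.atomsOf
  | or b b' => b.atomsOf ∪ b'.atomsOf

/-- `some q` if the formula is the atom `q`, else `none`. -/
def theAtom? : PB Q → Option Q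
  | atom q => some q
  | _ => none

/-- Substitution of formulas for atoms. -/
def bind : PB Q → (Q → PB R) → PB R
  | atom q, f => f q
  | and b b', f => and (b.bind f) (b'.bind f)
  | or b b', f => or (b.bind f) (b'.bind f)

/-- The list of subformulas of a formula. -/
def subs : PB Q → List (PB Q)
  | atom q => [atom q]
  | and b b' => and b b' :: (b.subs ++ b'.subs)
  | or b b' => or b b' :: (b.subs ++ b'.subs)

end PB

/-- A deterministic parity automaton over the alphabet `Γ`. -/
structure DPA (Γ : Type) : Type 1 where
  P : Type
  [finP : Finite P]
  [neP : Nonempty P]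
  p0 : P
  eta : P → Γ → P
  c : P → ℕ

attribute [instance] DPA.finP DPA.neP

/-- The run of a deterministic parity automaton on an infinite word. -/
def DPA.run {Γ : Type} (D : DPA Γ) (x : ℕ → Γ) : ℕ → D.P
  | 0 => D.p0
  | n + 1 => D.eta (D.run x n) (x n)

/-- A deterministic parity automaton accepts `x` iff the largest priority seen
infinitely often along the run is even. -/
def DPA.Accepts {Γ : Type} (D : DPA Γ) (x : ℕ → Γ) : Prop :=
  ∃ k, Even k ∧ {n | D.c (D.run x n) = k}.Infinite ∧
    ∀ j, k < j → {n | D.c (D.run x n) = j}.Finite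

/-- A set of infinite words over `Γ` is ω-regular iff it is recognized by some
deterministic parity automaton. -/
def OmegaRegular {Γ : Type} (W : Set (ℕ → Γ)) : Prop :=
  ∃ D : DPA Γ, ∀ x, x ∈ W ↔ D.Accepts x

/-- An alternating word automaton with states labeled into `Γ` and acceptance set
`W ⊆ Γ^ω`. -/
structure AltAutomaton (Sig Γ : Type) : Type 1 where
  Q : Type
  [finQ : Finite Q]
  [neQ : Nonempty Q]
  init : Q
  delta : Q → Sig → PB Q
  label : Q → Γ
  W : Set (ℕ → Γ)

attribute [instance] AltAutomaton.finQ AltAutomaton.neQ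

/-- A two-player win/lose game of infinite duration, given by a move relation,
ownership of positions (`eve p` iff `p` belongs to Eve), an initial position, and
a winning condition for Eve on plays. -/
structure Game (Pos : Type) where
  move : Pos → Pos → Prop
  eve : Pos → Prop
  init : Pos
  win : (ℕ → Pos) → Prop

namespace Game
variable {Pos : Type} (G : Game Pos)

/-- A play: an infinite sequence of successive positions starting at the initial position. -/
def IsPlay (p : ℕ → Pos) : Prop := p 0 = G.init ∧ ∀ n, G.move (p n) (p (n + 1))

/-- The history of a play up to (and including) time `n`. -/
def histOf (p : ℕ → Pos) (n : ℕ) : List Pos := (List.range (n + 1)).map p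

/-- A valid finite history: a finite sequence of successive positions from the
initial position. -/
def IsHist (l : List Pos) : Prop := l.head? = some G.init ∧ l.Chain' G.move

/-- The play `p` agrees with the strategy `σ` of Eve. -/
def AgreesE (σ : List Pos → Pos) (p : ℕ → Pos) : Prop :=
  ∀ n, G.eve (p n) → p (n + 1) = σ (histOf p n)

/-- The play `p` agrees with the strategy `σ` of Adam. -/
def AgreesA (σ : List Pos → Pos) (p : ℕ → Pos) : Prop :=
  ∀ n, ¬ G.eve (p n) → p (n + 1) = σ (histOf p n)

/-- `σ` is a winning strategy for Eve: it proposes legal moves at all of Eve's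
positions reachable along valid histories, and every play agreeing with it is won by Eve. -/
def WinsEve (σ : List Pos → Pos) : Prop :=
  (∀ (l : List Pos) (x : Pos), G.IsHist (l ++ [x]) → G.eve x → G.move x (σ (l ++ [x]))) ∧
  (∀ p, G.IsPlay p → G.AgreesE σ p → G.win p)

/-- `σ` is a winning strategy for Adam. -/
def WinsAdam (σ : List Pos → Pos) : Prop :=
  (∀ (l : List Pos) (x : Pos), G.IsHist (l ++ [x]) → ¬ G.eve x → G.move x (σ (l ++ [x]))) ∧
  (∀ p, G.IsPlay p → G.AgreesA σ p → ¬ G.win p)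

/-- Eve has a winning strategy in `G`. -/
def EveWins : Prop := ∃ σ, G.WinsEve σ

/-- Adam has a winning strategy in `G`. -/
def AdamWins : Prop := ∃ σ, G.WinsAdam σ

end Game

/-- `s` is the subsequence of values selected by `sel` along `p`,
in order and exhaustively. -/
def IsSubseqOn {X Y : Type} (sel : X → Option Y) (p : ℕ → X) (s : ℕ → Y) : Prop :=
  ∃ ix : ℕ → ℕ, StrictMono ix ∧ (∀ n, sel (p (ix n)) = some (s n)) ∧
    ∀ m, (sel (p m)).isSome → ∃ n, ix n = m

variable {Sig Gam : Type}

/-- Moves of the model-checking game `G(w, A)`. -/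
def mcMove (A : AltAutomaton Sig Gam) (w : ℕ → Sig) :
    (ℕ × PB A.Q) → (ℕ × PB A.Q) → Prop
  | (i, PB.atom q), (j, b) => j = i + 1 ∧ b = A.delta q (w i)
  | (i, PB.and b b'), (j, c) => j = i ∧ (c = b ∨ c = b')
  | (i, PB.or b b'), (j, c) => j = i ∧ (c = b ∨ c = b')

/-- The model-checking (membership) game `G(w, A)`. Disjunction positions belong to Eve;
conjunction and atom positions (the latter having a unique successor) belong to Adam.
Eve wins a play iff its state-sequence satisfies the acceptance condition. -/
def mcGame (A : AltAutomaton Sig Gam) (w : ℕ → Sig) : Game (ℕ × PB A.Q) where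
  move := mcMove A w
  eve := fun p => match p.2 with
    | PB.or _ _ => True
    | _ => False
  init := (0, PB.atom A.init)
  win := fun p => ∀ ρ : ℕ → A.Q, IsSubseqOn (fun x => x.2.theAtom?) p ρ →
    (fun n => A.label (ρ n)) ∈ A.W

/-- `A` accepts `w` iff Eve has a winning strategy in the model-checking game. -/
def AltAutomaton.Accepts (A : AltAutomaton Sig Gam) (w : ℕ → Sig) : Prop :=
  (mcGame A w).EveWins

/-- The language of `A`. -/
def AltAutomaton.lang (A : AltAutomaton Sig Gam) : Set (ℕ → Sig) :=
  {w | A.Accepts w}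

/-- A uniform strategy: a function of the word prefix read so far and the sequence of
transition conditions visited so far. -/
abbrev UStrat (Sig Q : Type) := List Sig → List (PB Q) → PB Q

/-- The prefix `w₀ … w_{i-1}` of an infinite word. -/
def wordPrefix (w : ℕ → Sig) (i : ℕ) : List Sig := (List.range i).map w

/-- The strategy in the model-checking game `G(w, A)` induced by following the uniform
strategy `τ` (at atom positions it takes the unique move). -/
def follow (A : AltAutomaton Sig Gam) (w : ℕ → Sig) (τ : UStrat Sig A.Q)
    (hs : List (ℕ × PB A.Q)) : ℕ × PB A.Q :=
  match hs.getLast?.getD (0, PB.atom A.init) with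
  | (i, PB.atom q) => (i + 1, A.delta q (w i))
  | (i, PB.and _ _) => (i, τ (wordPrefix w i) (hs.map Prod.snd))
  | (i, PB.or _ _) => (i, τ (wordPrefix w i) (hs.map Prod.snd))

/-- The nondeterminism in `A` is history-deterministic. -/
def NondetHD (A : AltAutomaton Sig Gam) : Prop :=
  ∃ τ : UStrat Sig A.Q, ∀ w ∈ A.lang, (mcGame A w).WinsEve (follow A w τ)

/-- The universality in `A` is history-deterministic. -/
def UnivHD (A : AltAutomaton Sig Gam) : Prop :=
  ∃ τ : UStrat Sig A.Q, ∀ w ∉ A.lang, (mcGame A w).WinsAdam (follow A w τ)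

/-- `A` is history-deterministic. -/
def HistoryDet (A : AltAutomaton Sig Gam) : Prop := NondetHD A ∧ UnivHD A

/-- Moves of the letter games: at an atom a letter is picked and the transition condition
is unfolded, at conjunctions and disjunctions a subformula is picked (with empty letter). -/
def letterMove (A : AltAutomaton Sig Gam) :
    (Option Sig × PB A.Q) → (Option Sig × PB A.Q) → Prop
  | (_, PB.atom q), (σ, b) => ∃ a : Sig, σ = some a ∧ b = A.delta q a
  | (_, PB.and b b'), (σ, c) => σ = none ∧ (c = b ∨ c = b')
  | (_, PB.or b b'), (σ, c) => σ = none ∧ (c = b ∨ c = b')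

/-- Eve's letter game: Adam picks the letters and resolves conjunctions, Eve resolves
disjunctions. Eve wins a play iff the word played is not in `L(A)` or the state-sequence
satisfies the acceptance condition. -/
def eveLetterGame (A : AltAutomaton Sig Gam) : Game (Option Sig × PB A.Q) where
  move := letterMove A
  eve := fun p => match p.2 with
    | PB.or _ _ => True
    | _ => False
  init := (none, PB.atom A.init)
  win := fun p => ∀ (w : ℕ → Sig) (ρ : ℕ → A.Q),
    IsSubseqOn (fun x => x.1) p w → IsSubseqOn (fun x => x.2.theAtom?) p ρ →
    (w ∉ A.lang ∨ (fun n => A.label (ρ n)) ∈ A.W)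

/-- Adam's letter game: Eve picks the letters and resolves disjunctions, Adam resolves
conjunctions. Adam wins a play iff the word played is in `L(A)` or the state-sequence does
not satisfy the acceptance condition (stated below as Eve's winning condition, negated). -/
def adamLetterGame (A : AltAutomaton Sig Gam) : Game (Option Sig × PB A.Q) where
  move := letterMove A
  eve := fun p => match p.2 with
    | PB.and _ _ => False
    | _ => True
  init := (none, PB.atom A.init)
  win := fun p => ∀ (w : ℕ → Sig) (ρ : ℕ → A.Q),
    IsSubseqOn (fun x => x.1) p w → IsSubseqOn (fun x => x.2.theAtom?) p ρ →
    (w ∉ A.lang ∧ (fun n => A.label (ρ n)) ∈ A.W)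

/-- The strategy in a letter game induced by following the uniform strategy `τ`. -/
def letterFollow (A : AltAutomaton Sig Gam) (τ : UStrat Sig A.Q)
    (hs : List (Option Sig × PB A.Q)) : Option Sig × PB A.Q :=
  (none, τ (hs.filterMap Prod.fst) (hs.map Prod.snd))

/-- The nondeterminism in `A` is compliant with the letter games. -/
def NondetCompliant (A : AltAutomaton Sig Gam) : Prop := (eveLetterGame A).EveWins

/-- The universality in `A` is compliant with the letter games. -/
def UnivCompliant (A : AltAutomaton Sig Gam) : Prop := (adamLetterGame A).AdamWins

/-- `A` is compliant with the letter games. -/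
def LetterCompliant (A : AltAutomaton Sig Gam) : Prop := NondetCompliant A ∧ UnivCompliant A

/-- A `Sig`-arena. -/
structure Arena (Sig : Type) : Type 1 where
  V : Type
  X : V → V → Prop
  VE : V → Prop
  C : V → Sig
  v0 : V
  total : ∀ v, ∃ v', X v v'

/-- The game on the arena `R` with winning condition `L`. -/
def arenaGame (R : Arena Sig) (L : Set (ℕ → Sig)) : Game R.V where
  move := R.X
  eve := R.VE
  init := R.v0
  win := fun p => (fun n => R.C (p n)) ∈ L

/-- Moves of the synchronized product `R × A`. -/
def prodMove (R : Arena Sig) (A : AltAutomaton Sig Gam) :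
    (R.V × PB A.Q) → (R.V × PB A.Q) → Prop
  | (v, PB.atom q), (v', b) => R.X v v' ∧ b = A.delta q (R.C v')
  | (v, PB.and b b'), (v', c) => v' = v ∧ (c = b ∨ c = b')
  | (v, PB.or b b'), (v', c) => v' = v ∧ (c = b ∨ c = b')

/-- The synchronized product game `R × A`. -/
def prodGame (R : Arena Sig) (A : AltAutomaton Sig Gam) : Game (R.V × PB A.Q) where
  move := prodMove R A
  eve := fun p => match p.2 with
    | PB.atom _ => R.VE p.1
    | PB.or _ _ => True
    | PB.and _ _ => False
  init := (R.v0, A.delta A.init (R.C R.v0))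
  win := fun p => ∀ ρ : ℕ → A.Q, IsSubseqOn (fun x => x.2.theAtom?) p ρ →
    (fun n => A.label (ρ n)) ∈ A.W

/-- `A` is good for game composition. -/
def GoodForGames (A : AltAutomaton Sig Gam) : Prop :=
  ∀ R : Arena Sig, ((arenaGame R A.lang).EveWins ↔ (prodGame R A).EveWins)

/-- The composition `B × A` of an automaton `B` with `Sig`-labeled states with the
automaton `A` over `Sig`. -/
def compose {Sig' : Type} (B : AltAutomaton Sig' Sig) (A : AltAutomaton Sig Gam) :
    AltAutomaton Sig' Gam where
  Q := B.Q × A.Q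
  init := (B.init, A.init)
  delta := fun p a => (B.delta p.1 a).bind fun qB' =>
    (A.delta p.2 (B.label qB')).bind fun qA' => PB.atom (qB', qA')
  label := fun p => A.label p.2
  W := A.W

/-- `A` is good for automata composition: composing with any alternating automaton `B`
whose acceptance condition is `L(A)` preserves the language. -/
def GoodForAutomata (A : AltAutomaton Sig Gam) : Prop :=
  ∀ (Sig' : Type) (B : AltAutomaton Sig' Sig), B.W = A.lang →
    (compose B A).lang = B.lang

/-- The underlying graph of the arena is a tree rooted at the initial node: every node is
reached from the root by a unique path. -/
def Arena.IsTree (R : Arena Sig) : Prop :=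
  ∀ v : R.V, ∃! l : List R.V,
    l.head? = some R.v0 ∧ l.getLast? = some v ∧ l.Chain' R.X

/-- The arena with ownership of positions reassigned. -/
def Arena.reassign (R : Arena Sig) (E : R.V → Prop) : Arena Sig :=
  { R with VE := E }

/-- A branch of (the tree underlying) an arena. -/
def Arena.Branch (R : Arena Sig) (p : ℕ → R.V) : Prop :=
  p 0 = R.v0 ∧ ∀ n, R.X (p n) (p (n + 1))

/-- `R` is a one-player arena. -/
def Arena.OnePlayer (R : Arena Sig) : Prop := (∀ v, R.VE v) ∨ (∀ v, ¬ R.VE v)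

/-- `A` is good for trees: its universal expansion accepts exactly the trees all of whose
branches are in `L(A)`, and its existential expansion accepts exactly the trees having a
branch in `L(A)`. -/
def GoodForTrees (A : AltAutomaton Sig Gam) : Prop :=
  ∀ R : Arena Sig, R.IsTree →
    (((prodGame (R.reassign fun _ => False) A).EveWins ↔
        ∀ p : ℕ → R.V, R.Branch p → (fun n => R.C (p n)) ∈ A.lang) ∧
     ((prodGame (R.reassign fun _ => True) A).EveWins ↔
        ∃ p : ℕ → R.V, R.Branch p ∧ (fun n => R.C (p n)) ∈ A.lang))

/-- `A` is nondeterministic: all transition conditions are disjunctions of atoms. -/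
def AltAutomaton.IsNondet (A : AltAutomaton Sig Gam) : Prop :=
  ∀ q a, (A.delta q a).IsDisj

/-- `A` is universal: all transition conditions are conjunctions of atoms. -/
def AltAutomaton.IsUniv (A : AltAutomaton Sig Gam) : Prop :=
  ∀ q a, (A.delta q a).IsConj

/-- `A` is deterministic: all transition conditions are atoms. -/
def AltAutomaton.IsDet (A : AltAutomaton Sig Gam) : Prop :=
  ∀ q a, (A.delta q a).IsAtom

/-- The Büchi acceptance set over `Bool`-labelings: `true` occurs infinitely often. -/
def BuchiW : Set (ℕ → Bool) := {x | {n | x n = true}.Infinite}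

/-- The co-Büchi acceptance set over `Bool`-labelings: `false` occurs finitely often. -/
def CoBuchiW : Set (ℕ → Bool) := {x | {n | x n = false}.Finite}

/-- The edge relation of the graph induced by the transition function. -/
def edgeRel (A : AltAutomaton Sig Gam) (q q' : A.Q) : Prop :=
  ∃ a, q' ∈ (A.delta q a).atomsOf

/-- A Büchi automaton (with `Bool` labels) is weak if in every strongly connected component
all states have the same label. -/
def IsWeak (A : AltAutomaton Sig Bool) : Prop :=
  ∀ q q', Relation.ReflTransGen (edgeRel A) q q' → Relation.ReflTransGen (edgeRel A) q' q →
    A.label q = A.label q'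

end GFG
namespace GFG

/-- An alternating automaton over finite words. -/
structure AFA (Sig : Type) : Type 1 where
  Q : Type
  [finQ : Finite Q]
  [neQ : Nonempty Q]
  init : Q
  delta : Q → Sig → PB Q
  F : Set Q

attribute [instance] AFA.finQ AFA.neQ

/-- A finite-duration two-player game: maximal plays end at terminal positions (positions
with no successor), and `winE` tells which terminal positions are winning for Eve. -/
structure FGame (Pos : Type) where
  move : Pos → Pos → Prop
  eve : Pos → Prop
  init : Pos
  winE : Pos → Prop

namespace FGame
variable {Pos : Type} (G : FGame Pos)

/-- A valid finite history. -/
def IsHist (l : List Pos) : Prop := l.head? = some G.init ∧ l.Chain' G.move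

/-- A terminal position. -/
def Terminal (x : Pos) : Prop := ∀ y, ¬ G.move x y

/-- The finite history `l` agrees with Eve's strategy `σ`. -/
def AgreesE (σ : List Pos → Pos) (l : List Pos) : Prop :=
  ∀ i (h : i + 1 < l.length), G.eve (l[i]'(Nat.lt_of_succ_lt h)) →
    l[i + 1]'h = σ (l.take (i + 1))

/-- The finite history `l` agrees with Adam's strategy `σ`. -/
def AgreesA (σ : List Pos → Pos) (l : List Pos) : Prop :=
  ∀ i (h : i + 1 < l.length), ¬ G.eve (l[i]'(Nat.lt_of_succ_lt h)) →
    l[i + 1]'h = σ (l.take (i + 1))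

/-- `σ` is a winning strategy for Eve: it proposes legal moves at Eve's non-terminal
positions, and every maximal play agreeing with it ends in a position winning for Eve. -/
def WinsEve (σ : List Pos → Pos) : Prop :=
  (∀ (l : List Pos) (x : Pos), G.IsHist (l ++ [x]) → G.eve x → ¬ G.Terminal x →
    G.move x (σ (l ++ [x]))) ∧
  (∀ (l : List Pos) (x : Pos), G.IsHist (l ++ [x]) → G.AgreesE σ (l ++ [x]) →
    G.Terminal x → G.winE x)

/-- `σ` is a winning strategy for Adam. -/
def WinsAdam (σ : List Pos → Pos) : Prop :=
  (∀ (l : List Pos) (x : Pos), G.IsHist (l ++ [x]) → ¬ G.eve x → ¬ G.Terminal x →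
    G.move x (σ (l ++ [x]))) ∧
  (∀ (l : List Pos) (x : Pos), G.IsHist (l ++ [x]) → G.AgreesA σ (l ++ [x]) →
    G.Terminal x → ¬ G.winE x)

/-- Eve has a winning strategy. -/
def EveWins : Prop := ∃ σ, G.WinsEve σ

end FGame

variable {Sig : Type}

/-- Moves of the membership game `G(u, A)` of an automaton over finite words. -/
def fmove (A : AFA Sig) (u : List Sig) : (ℕ × PB A.Q) → (ℕ × PB A.Q) → Prop
  | (i, PB.atom q), (j, b) => ∃ a, u[i]? = some a ∧ j = i + 1 ∧ b = A.delta q a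
  | (i, PB.and b b'), (j, c) => j = i ∧ (c = b ∨ c = b')
  | (i, PB.or b b'), (j, c) => j = i ∧ (c = b ∨ c = b')

/-- The membership game `G(u, A)`: its terminal positions are the positions `(|u|, q)` with
`q` a state, and such a position is winning for Eve iff `q ∈ F`. -/
def memGame (A : AFA Sig) (u : List Sig) : FGame (ℕ × PB A.Q) where
  move := fmove A u
  eve := fun p => match p.2 with
    | PB.or _ _ => True
    | _ => False
  init := (0, PB.atom A.init)
  winE := fun p => match p.2 with
    | PB.atom q => p.1 = u.length ∧ q ∈ A.F
    | _ => False

/-- `A` accepts the finite word `u` iff Eve has a winning strategy in `G(u, A)`. -/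
def AFA.Accepts (A : AFA Sig) (u : List Sig) : Prop := (memGame A u).EveWins

/-- The language of an automaton over finite words. -/
def AFA.lang (A : AFA Sig) : Set (List Sig) := {u | A.Accepts u}

/-- The strategy in `G(u, A)` induced by following a uniform strategy `τ`
(at atom positions it takes the unique move). -/
def ffollow (A : AFA Sig) (u : List Sig) (τ : List Sig → List (PB A.Q) → PB A.Q)
    (hs : List (ℕ × PB A.Q)) : ℕ × PB A.Q :=
  match hs.getLast?.getD (0, PB.atom A.init) with
  | (i, PB.atom q) => (i + 1,
      match u[i]? with
      | some a => A.delta q a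
      | none => PB.atom q)
  | (i, PB.and _ _) => (i, τ (u.take i) (hs.map Prod.snd))
  | (i, PB.or _ _) => (i, τ (u.take i) (hs.map Prod.snd))

/-- `A` is GFG: there are uniform strategies resolving the nondeterminism and the
universality on the fly. -/
def AFA.GFG (A : AFA Sig) : Prop :=
  (∃ τ, ∀ u ∈ A.lang, (memGame A u).WinsEve (ffollow A u τ)) ∧
  (∃ τ, ∀ u ∉ A.lang, (memGame A u).WinsAdam (ffollow A u τ))

section Statement13Proof

open Classical

variable {Sig : Type}

namespace S13

/-! ### Generic helpers about finite games -/

theorem agreesE_snoc {Pos : Type} {G : FGame Pos} {σ : List Pos → Pos} {l : List Pos} {x : Pos}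
    (hl : G.AgreesE σ l)
    (hx : ∀ y, l.getLast? = some y → G.eve y → x = σ l) :
    G.AgreesE σ (l ++ [x]) := by
  intro i hi he
  by_cases hc : i + 1 < l.length
  · have hi0 : i < l.length := by omega
    have e0 : (l ++ [x])[i]'(Nat.lt_of_succ_lt hi) = l[i]'hi0 := List.getElem_append_left hi0
    have e1 : (l ++ [x])[i + 1]'hi = l[i + 1]'hc := List.getElem_append_left hc
    have e2 : (l ++ [x]).take (i + 1) = l.take (i + 1) :=
      List.take_append_of_le_length (by omega)
    rw [e1, e2]
    refine hl i hc ?_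
    rw [e0] at he
    exact he
  · have hlen : (l ++ [x]).length = l.length + 1 := by simp
    have hi' : i + 1 = l.length := by omega
    have hi0 : i < l.length := by omega
    have e0 : (l ++ [x])[i]'(Nat.lt_of_succ_lt hi) = l[i]'hi0 := List.getElem_append_left hi0
    have e1 : (l ++ [x])[i + 1]'hi = x := List.getElem_concat_length hi' hi
    have e2 : (l ++ [x]).take (i + 1) = l := by rw [hi']; exact List.take_left
    have hy : l.getLast? = some (l[i]'hi0) := by
      rw [List.getLast?_eq_getElem?]
      have hh : l.length - 1 = i := by omega
      rw [hh, List.getElem?_eq_getElem hi0]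
    rw [e1, e2]
    refine hx _ hy ?_
    rw [e0] at he
    exact he

theorem agreesA_snoc {Pos : Type} {G : FGame Pos} {σ : List Pos → Pos} {l : List Pos} {x : Pos}
    (hl : G.AgreesA σ l)
    (hx : ∀ y, l.getLast? = some y → ¬ G.eve y → x = σ l) :
    G.AgreesA σ (l ++ [x]) := by
  intro i hi he
  by_cases hc : i + 1 < l.length
  · have hi0 : i < l.length := by omega
    have e0 : (l ++ [x])[i]'(Nat.lt_of_succ_lt hi) = l[i]'hi0 := List.getElem_append_left hi0
    have e1 : (l ++ [x])[i + 1]'hi = l[i + 1]'hc := List.getElem_append_left hc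
    have e2 : (l ++ [x]).take (i + 1) = l.take (i + 1) :=
      List.take_append_of_le_length (by omega)
    rw [e1, e2]
    refine hl i hc ?_
    rw [e0] at he
    exact he
  · have hlen : (l ++ [x]).length = l.length + 1 := by simp
    have hi' : i + 1 = l.length := by omega
    have hi0 : i < l.length := by omega
    have e0 : (l ++ [x])[i]'(Nat.lt_of_succ_lt hi) = l[i]'hi0 := List.getElem_append_left hi0
    have e1 : (l ++ [x])[i + 1]'hi = x := List.getElem_concat_length hi' hi
    have e2 : (l ++ [x]).take (i + 1) = l := by rw [hi']; exact List.take_left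
    have hy : l.getLast? = some (l[i]'hi0) := by
      rw [List.getLast?_eq_getElem?]
      have hh : l.length - 1 = i := by omega
      rw [hh, List.getElem?_eq_getElem hi0]
    rw [e1, e2]
    refine hx _ hy ?_
    rw [e0] at he
    exact he

theorem agreesE_singleton {Pos : Type} (G : FGame Pos) (σ : List Pos → Pos) (x : Pos) :
    G.AgreesE σ [x] := by
  intro i hi _
  exact absurd hi (by simp)

theorem agreesA_singleton {Pos : Type} (G : FGame Pos) (σ : List Pos → Pos) (x : Pos) :
    G.AgreesA σ [x] := by
  intro i hi _
  exact absurd hi (by simp)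

theorem isHist_snoc {Pos : Type} {G : FGame Pos} {l : List Pos} {x y : Pos}
    (h : G.IsHist l) (hx : l.getLast? = some x) (hm : G.move x y) :
    G.IsHist (l ++ [y]) := by
  constructor
  · rw [List.head?_append, h.1]
    rfl
  · rw [List.Chain', List.isChain_append]
    refine ⟨h.2, List.isChain_singleton _, ?_⟩
    intro a ha b hb
    rw [hx] at ha
    simp only [Option.mem_def, Option.some.injEq, List.head?_cons] at ha hb
    subst ha
    subst hb
    exact hm

/-! ### Basic facts about the membership game -/

theorem terminal_atom {A : AFA Sig} (w : List Sig) (q : A.Q) :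
    (memGame A w).Terminal (w.length, PB.atom q) := by
  rintro ⟨j, c⟩ hm
  obtain ⟨a, ha, -, -⟩ := hm
  rw [List.getElem?_eq_none (le_refl _)] at ha
  cases ha

theorem not_terminal_or {A : AFA Sig} (w : List Sig) (i : ℕ) (b1 b2 : PB A.Q) :
    ¬ (memGame A w).Terminal (i, PB.or b1 b2) :=
  fun h => h (i, b1) ⟨rfl, Or.inl rfl⟩

theorem not_terminal_and {A : AFA Sig} (w : List Sig) (i : ℕ) (b1 b2 : PB A.Q) :
    ¬ (memGame A w).Terminal (i, PB.and b1 b2) :=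
  fun h => h (i, b1) ⟨rfl, Or.inl rfl⟩

theorem ffollow_or (A : AFA Sig) (u : List Sig) (τ : List Sig → List (PB A.Q) → PB A.Q)
    {hs : List (ℕ × PB A.Q)} {i : ℕ} {b1 b2 : PB A.Q}
    (h : hs.getLast? = some (i, PB.or b1 b2)) :
    ffollow A u τ hs = (i, τ (u.take i) (hs.map Prod.snd)) := by
  unfold ffollow
  rw [h]
  rfl

theorem ffollow_and (A : AFA Sig) (u : List Sig) (τ : List Sig → List (PB A.Q) → PB A.Q)
    {hs : List (ℕ × PB A.Q)} {i : ℕ} {b1 b2 : PB A.Q}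
    (h : hs.getLast? = some (i, PB.and b1 b2)) :
    ffollow A u τ hs = (i, τ (u.take i) (hs.map Prod.snd)) := by
  unfold ffollow
  rw [h]
  rfl

theorem ffollow_atom (A : AFA Sig) (u : List Sig) (τ : List Sig → List (PB A.Q) → PB A.Q)
    {hs : List (ℕ × PB A.Q)} {i : ℕ} {q : A.Q} {a : Sig}
    (h : hs.getLast? = some (i, PB.atom q)) (ha : u[i]? = some a) :
    ffollow A u τ hs = (i + 1, A.delta q a) := by
  unfold ffollow
  rw [h]
  show (i + 1, match u[i]? with | some a => A.delta q a | none => PB.atom q) = _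
  rw [ha]

/-! ### The synchronized double play following both uniform strategies -/

def GoodH (A : AFA Sig) (w : List Sig) (i : ℕ) (b : PB A.Q) (h : List (ℕ × PB A.Q)) : Prop :=
  (memGame A w).IsHist h ∧ h.getLast? = some (i, b)

theorem goodH_snoc {A : AFA Sig} {w : List Sig} {i : ℕ} {b : PB A.Q}
    {h : List (ℕ × PB A.Q)} {j : ℕ} {c : PB A.Q}
    (g : GoodH A w i b h) (hm : fmove A w (i, b) (j, c)) :
    GoodH A w j c (h ++ [(j, c)]) :=
  ⟨isHist_snoc g.1 g.2 hm, List.getLast?_concat⟩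

theorem goodH_init (A : AFA Sig) (w : List Sig) :
    GoodH A w 0 (PB.atom A.init) [(0, PB.atom A.init)] :=
  ⟨⟨rfl, List.isChain_singleton _⟩, rfl⟩

open Classical in
/-- Resolve a formula down to its atoms, following `τE` at disjunctions (using the
first game's history) and `τA` at conjunctions (using the second game's history),
defaulting to the left subformula when the proposed move is illegal.  The two plays
are kept synchronized. -/
noncomputable def resB (A : AFA Sig) (τE τA : List Sig → List (PB A.Q) → PB A.Q)
    (w1 w2 : List Sig) (i1 i2 : ℕ) :
    PB A.Q → List (ℕ × PB A.Q) → List (ℕ × PB A.Q) →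
    (A.Q → List (ℕ × PB A.Q) → List (ℕ × PB A.Q) →
      List (ℕ × PB A.Q) × List (ℕ × PB A.Q) × A.Q) →
    List (ℕ × PB A.Q) × List (ℕ × PB A.Q) × A.Q
  | PB.atom q, h1, h2, k => k q h1 h2
  | PB.or b1 b2, h1, h2, k =>
      if τE (w1.take i1) (h1.map Prod.snd) = b1 then
        resB A τE τA w1 w2 i1 i2 b1 (h1 ++ [(i1, b1)]) (h2 ++ [(i2, b1)]) k
      else if τE (w1.take i1) (h1.map Prod.snd) = b2 then
        resB A τE τA w1 w2 i1 i2 b2 (h1 ++ [(i1, b2)]) (h2 ++ [(i2, b2)]) k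
      else
        resB A τE τA w1 w2 i1 i2 b1 (h1 ++ [(i1, b1)]) (h2 ++ [(i2, b1)]) k
  | PB.and b1 b2, h1, h2, k =>
      if τA (w2.take i2) (h2.map Prod.snd) = b1 then
        resB A τE τA w1 w2 i1 i2 b1 (h1 ++ [(i1, b1)]) (h2 ++ [(i2, b1)]) k
      else if τA (w2.take i2) (h2.map Prod.snd) = b2 then
        resB A τE τA w1 w2 i1 i2 b2 (h1 ++ [(i1, b2)]) (h2 ++ [(i2, b2)]) k
      else
        resB A τE τA w1 w2 i1 i2 b1 (h1 ++ [(i1, b1)]) (h2 ++ [(i2, b1)]) k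

/-- Play `n` rounds (letters) of the synchronized double play. -/
noncomputable def resN (A : AFA Sig) (τE τA : List Sig → List (PB A.Q) → PB A.Q)
    (w1 w2 : List Sig) :
    ℕ → PB A.Q → ℕ → ℕ → List (ℕ × PB A.Q) → List (ℕ × PB A.Q) →
    List (ℕ × PB A.Q) × List (ℕ × PB A.Q) × A.Q
  | 0, b, i1, i2, h1, h2 =>
      resB A τE τA w1 w2 i1 i2 b h1 h2 (fun q h1' h2' => (h1', h2', q))
  | n + 1, b, i1, i2, h1, h2 =>
      resB A τE τA w1 w2 i1 i2 b h1 h2 (fun q h1' h2' =>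
        match w1[i1]? with
        | some a => resN A τE τA w1 w2 n (A.delta q a) (i1 + 1) (i2 + 1)
            (h1' ++ [(i1 + 1, A.delta q a)]) (h2' ++ [(i2 + 1, A.delta q a)])
        | none => (h1', h2', q))

/-- The conclusion of the main invariance lemma. -/
def Conc (A : AFA Sig) (τE τA : List Sig → List (PB A.Q) → PB A.Q)
    (w1 w2 : List Sig) (m1 m2 : ℕ) (h1 h2 : List (ℕ × PB A.Q))
    (o : List (ℕ × PB A.Q) × List (ℕ × PB A.Q) × A.Q) : Prop :=
  GoodH A w1 m1 (PB.atom o.2.2) o.1 ∧ GoodH A w2 m2 (PB.atom o.2.2) o.2.1 ∧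
  (w1 ∈ A.lang → (memGame A w1).AgreesE (ffollow A w1 τE) h1 →
    (memGame A w1).AgreesE (ffollow A w1 τE) o.1) ∧
  (w2 ∉ A.lang → (memGame A w2).AgreesA (ffollow A w2 τA) h2 →
    (memGame A w2).AgreesA (ffollow A w2 τA) o.2.1)

theorem resB_spec (A : AFA Sig) (τE τA : List Sig → List (PB A.Q) → PB A.Q)
    (w1 w2 : List Sig)
    (hE : w1 ∈ A.lang → (memGame A w1).WinsEve (ffollow A w1 τE))
    (hA2 : w2 ∉ A.lang → (memGame A w2).WinsAdam (ffollow A w2 τA))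
    (m1 m2 i1 i2 : ℕ) :
    ∀ (b : PB A.Q) (h1 h2 : List (ℕ × PB A.Q))
      (k : A.Q → List (ℕ × PB A.Q) → List (ℕ × PB A.Q) →
        List (ℕ × PB A.Q) × List (ℕ × PB A.Q) × A.Q),
      GoodH A w1 i1 b h1 → GoodH A w2 i2 b h2 →
      (∀ q h1' h2', GoodH A w1 i1 (PB.atom q) h1' → GoodH A w2 i2 (PB.atom q) h2' →
        Conc A τE τA w1 w2 m1 m2 h1' h2' (k q h1' h2')) →
      Conc A τE τA w1 w2 m1 m2 h1 h2 (resB A τE τA w1 w2 i1 i2 b h1 h2 k) := by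
  intro b
  induction b with
  | atom q =>
    intro h1 h2 k g1 g2 hk
    exact hk q h1 h2 g1 g2
  | or b1 b2 ih1 ih2 =>
    intro h1 h2 k g1 g2 hk
    have step : ∀ c, (c = b1 ∨ c = b2) →
        (w1 ∈ A.lang → (memGame A w1).AgreesE (ffollow A w1 τE) h1 →
          (memGame A w1).AgreesE (ffollow A w1 τE) (h1 ++ [(i1, c)])) →
        Conc A τE τA w1 w2 m1 m2 h1 h2
          (resB A τE τA w1 w2 i1 i2 c (h1 ++ [(i1, c)]) (h2 ++ [(i2, c)]) k) := by
      intro c hc hag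
      have g1' : GoodH A w1 i1 c (h1 ++ [(i1, c)]) := goodH_snoc g1 ⟨rfl, hc⟩
      have g2' : GoodH A w2 i2 c (h2 ++ [(i2, c)]) := goodH_snoc g2 ⟨rfl, hc⟩
      have ihc : Conc A τE τA w1 w2 m1 m2 (h1 ++ [(i1, c)]) (h2 ++ [(i2, c)])
          (resB A τE τA w1 w2 i1 i2 c (h1 ++ [(i1, c)]) (h2 ++ [(i2, c)]) k) := by
        rcases hc with rfl | rfl
        · exact ih1 _ _ k g1' g2' hk
        · exact ih2 _ _ k g1' g2' hk
      refine ⟨ihc.1, ihc.2.1, ?_, ?_⟩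
      · intro hw hA1
        exact ihc.2.2.1 hw (hag hw hA1)
      · intro hw hA1
        refine ihc.2.2.2 hw (agreesA_snoc hA1 ?_)
        intro y hy hev
        rw [g2.2] at hy
        injection hy with hy
        subst hy
        exact absurd trivial hev
    simp only [resB]
    split_ifs with hp1 hp2
    · refine step b1 (Or.inl rfl) (fun hw hA1 => agreesE_snoc hA1 ?_)
      intro y hy _
      rw [g1.2] at hy
      injection hy with hy
      subst hy
      rw [ffollow_or A w1 τE g1.2, hp1]
    · refine step b2 (Or.inr rfl) (fun hw hA1 => agreesE_snoc hA1 ?_)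
      intro y hy _
      rw [g1.2] at hy
      injection hy with hy
      subst hy
      rw [ffollow_or A w1 τE g1.2, hp2]
    · refine step b1 (Or.inl rfl) (fun hw hA1 => ?_)
      exfalso
      have hh : h1.dropLast ++ [(i1, PB.or b1 b2)] = h1 := by
        obtain ⟨l', rfl⟩ := List.getLast?_eq_some_iff.mp g1.2
        simp
      have hmv := (hE hw).1 h1.dropLast (i1, PB.or b1 b2) (by rw [hh]; exact g1.1) trivial
        (not_terminal_or w1 i1 b1 b2)
      rw [hh, ffollow_or A w1 τE g1.2] at hmv
      obtain ⟨-, hmv⟩ := hmv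
      rcases hmv with hmv | hmv
      · exact hp1 hmv
      · exact hp2 hmv
  | and b1 b2 ih1 ih2 =>
    intro h1 h2 k g1 g2 hk
    have step : ∀ c, (c = b1 ∨ c = b2) →
        (w2 ∉ A.lang → (memGame A w2).AgreesA (ffollow A w2 τA) h2 →
          (memGame A w2).AgreesA (ffollow A w2 τA) (h2 ++ [(i2, c)])) →
        Conc A τE τA w1 w2 m1 m2 h1 h2
          (resB A τE τA w1 w2 i1 i2 c (h1 ++ [(i1, c)]) (h2 ++ [(i2, c)]) k) := by
      intro c hc hag
      have g1' : GoodH A w1 i1 c (h1 ++ [(i1, c)]) := goodH_snoc g1 ⟨rfl, hc⟩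
      have g2' : GoodH A w2 i2 c (h2 ++ [(i2, c)]) := goodH_snoc g2 ⟨rfl, hc⟩
      have ihc : Conc A τE τA w1 w2 m1 m2 (h1 ++ [(i1, c)]) (h2 ++ [(i2, c)])
          (resB A τE τA w1 w2 i1 i2 c (h1 ++ [(i1, c)]) (h2 ++ [(i2, c)]) k) := by
        rcases hc with rfl | rfl
        · exact ih1 _ _ k g1' g2' hk
        · exact ih2 _ _ k g1' g2' hk
      refine ⟨ihc.1, ihc.2.1, ?_, ?_⟩
      · intro hw hA1
        refine ihc.2.2.1 hw (agreesE_snoc hA1 ?_)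
        intro y hy hev
        rw [g1.2] at hy
        injection hy with hy
        subst hy
        exact hev.elim
      · intro hw hA1
        exact ihc.2.2.2 hw (hag hw hA1)
    simp only [resB]
    split_ifs with hp1 hp2
    · refine step b1 (Or.inl rfl) (fun hw hA1 => agreesA_snoc hA1 ?_)
      intro y hy _
      rw [g2.2] at hy
      injection hy with hy
      subst hy
      rw [ffollow_and A w2 τA g2.2, hp1]
    · refine step b2 (Or.inr rfl) (fun hw hA1 => agreesA_snoc hA1 ?_)
      intro y hy _
      rw [g2.2] at hy
      injection hy with hy
      subst hy
      rw [ffollow_and A w2 τA g2.2, hp2]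
    · refine step b1 (Or.inl rfl) (fun hw hA1 => ?_)
      exfalso
      have hh : h2.dropLast ++ [(i2, PB.and b1 b2)] = h2 := by
        obtain ⟨l', rfl⟩ := List.getLast?_eq_some_iff.mp g2.2
        simp
      have hmv := (hA2 hw).1 h2.dropLast (i2, PB.and b1 b2) (by rw [hh]; exact g2.1)
        (fun hfalse => hfalse) (not_terminal_and w2 i2 b1 b2)
      rw [hh, ffollow_and A w2 τA g2.2] at hmv
      obtain ⟨-, hmv⟩ := hmv
      rcases hmv with hmv | hmv
      · exact hp1 hmv
      · exact hp2 hmv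

theorem resN_spec (A : AFA Sig) (τE τA : List Sig → List (PB A.Q) → PB A.Q)
    (w1 w2 : List Sig)
    (hE : w1 ∈ A.lang → (memGame A w1).WinsEve (ffollow A w1 τE))
    (hA2 : w2 ∉ A.lang → (memGame A w2).WinsAdam (ffollow A w2 τA))
    (m1 m2 : ℕ) (hm1 : m1 ≤ w1.length) (hm2 : m2 ≤ w2.length) :
    ∀ (n : ℕ) (b : PB A.Q) (i1 i2 : ℕ) (h1 h2 : List (ℕ × PB A.Q)),
      i1 ≤ m1 → i2 ≤ m2 → m1 - i1 = n → m2 - i2 = n →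
      (∀ j, j < n → w1[i1 + j]? = w2[i2 + j]?) →
      GoodH A w1 i1 b h1 → GoodH A w2 i2 b h2 →
      Conc A τE τA w1 w2 m1 m2 h1 h2 (resN A τE τA w1 w2 n b i1 i2 h1 h2) := by
  intro n
  induction n with
  | zero =>
    intro b i1 i2 h1 h2 hi1 hi2 hn1 hn2 _ g1 g2
    have e1 : i1 = m1 := by omega
    have e2 : i2 = m2 := by omega
    simp only [resN]
    refine resB_spec A τE τA w1 w2 hE hA2 m1 m2 i1 i2 b h1 h2 _ g1 g2 ?_
    intro q h1' h2' g1' g2'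
    exact ⟨e1 ▸ g1', e2 ▸ g2', fun _ hh => hh, fun _ hh => hh⟩
  | succ n ihn =>
    intro b i1 i2 h1 h2 hi1 hi2 hn1 hn2 hlet g1 g2
    simp only [resN]
    refine resB_spec A τE τA w1 w2 hE hA2 m1 m2 i1 i2 b h1 h2 _ g1 g2 ?_
    intro q h1' h2' g1' g2'
    have hi1' : i1 < w1.length := by omega
    have ha : w1[i1]? = some (w1[i1]'hi1') := List.getElem?_eq_getElem hi1'
    have ha2 : w2[i2]? = some (w1[i1]'hi1') := by
      have h00 := hlet 0 (by omega)
      simp only [Nat.add_zero] at h00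
      rw [← h00]
      exact ha
    simp only [ha]
    have g1'' : GoodH A w1 (i1 + 1) (A.delta q (w1[i1]'hi1'))
        (h1' ++ [(i1 + 1, A.delta q (w1[i1]'hi1'))]) :=
      goodH_snoc g1' ⟨w1[i1]'hi1', ha, rfl, rfl⟩
    have g2'' : GoodH A w2 (i2 + 1) (A.delta q (w1[i1]'hi1'))
        (h2' ++ [(i2 + 1, A.delta q (w1[i1]'hi1'))]) :=
      goodH_snoc g2' ⟨w1[i1]'hi1', ha2, rfl, rfl⟩
    have key := ihn (A.delta q (w1[i1]'hi1')) (i1 + 1) (i2 + 1)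
        (h1' ++ [(i1 + 1, A.delta q (w1[i1]'hi1'))])
        (h2' ++ [(i2 + 1, A.delta q (w1[i1]'hi1'))])
        (by omega) (by omega) (by omega) (by omega)
        (fun j hj => by
          have hl := hlet (j + 1) (by omega)
          have e1 : i1 + (j + 1) = i1 + 1 + j := by omega
          have e2 : i2 + (j + 1) = i2 + 1 + j := by omega
          rw [e1, e2] at hl
          exact hl)
        g1'' g2''
    refine ⟨key.1, key.2.1, ?_, ?_⟩
    · intro hw hag
      refine key.2.2.1 hw (agreesE_snoc hag ?_)
      intro y hy hev
      rw [g1'.2] at hy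
      injection hy with hy
      subst hy
      exact hev.elim
    · intro hw hag
      refine key.2.2.2 hw (agreesA_snoc hag ?_)
      intro y hy _
      rw [g2'.2] at hy
      injection hy with hy
      subst hy
      rw [ffollow_atom A w2 τA g2'.2 ha2]

/-! ### The double play only depends on the relevant prefixes of the words -/

theorem take_eq_of_take_eq {α : Type*} {v v' : List α} {M i : ℕ} (h : i ≤ M)
    (ht : v.take M = v'.take M) : v.take i = v'.take i := by
  have h2 := congrArg (List.take i) ht
  rwa [List.take_take, List.take_take, inf_eq_left.mpr h] at h2

theorem getElem?_eq_of_take_eq {α : Type*} {v v' : List α} {M i : ℕ} (h : i < M)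
    (ht : v.take M = v'.take M) : v[i]? = v'[i]? := by
  have h2 := congrArg (fun l : List α => l[i]?) ht
  simpa [List.getElem?_take, h] using h2

theorem resB_congr (A : AFA Sig) (τE τA : List Sig → List (PB A.Q) → PB A.Q)
    (w1 w2 w1' w2' : List Sig) (i1 i2 : ℕ)
    (ht1 : w1.take i1 = w1'.take i1) (ht2 : w2.take i2 = w2'.take i2) :
    ∀ (b : PB A.Q) (h1 h2 : List (ℕ × PB A.Q)) (k k' : _),
      (∀ q h1' h2', k q h1' h2' = k' q h1' h2') →
      resB A τE τA w1 w2 i1 i2 b h1 h2 k = resB A τE τA w1' w2' i1 i2 b h1 h2 k' := by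
  intro b
  induction b with
  | atom q =>
    intro h1 h2 k k' hk
    exact hk q h1 h2
  | or b1 b2 ih1 ih2 =>
    intro h1 h2 k k' hk
    simp only [resB, ht1]
    split_ifs with hp1 hp2
    · exact ih1 _ _ _ _ hk
    · exact ih2 _ _ _ _ hk
    · exact ih1 _ _ _ _ hk
  | and b1 b2 ih1 ih2 =>
    intro h1 h2 k k' hk
    simp only [resB, ht2]
    split_ifs with hp1 hp2
    · exact ih1 _ _ _ _ hk
    · exact ih2 _ _ _ _ hk
    · exact ih1 _ _ _ _ hk

theorem resN_congr (A : AFA Sig) (τE τA : List Sig → List (PB A.Q) → PB A.Q)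
    (w1 w2 w1' w2' : List Sig) :
    ∀ (n : ℕ) (b : PB A.Q) (i1 i2 : ℕ) (h1 h2 : List (ℕ × PB A.Q)),
      w1.take (i1 + n) = w1'.take (i1 + n) → w2.take (i2 + n) = w2'.take (i2 + n) →
      resN A τE τA w1 w2 n b i1 i2 h1 h2 = resN A τE τA w1' w2' n b i1 i2 h1 h2 := by
  intro n
  induction n with
  | zero =>
    intro b i1 i2 h1 h2 ht1 ht2
    simp only [Nat.add_zero] at ht1 ht2
    simp only [resN]
    exact resB_congr A τE τA w1 w2 w1' w2' i1 i2 ht1 ht2 b h1 h2 _ _ (fun _ _ _ => rfl)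
  | succ n ihn =>
    intro b i1 i2 h1 h2 ht1 ht2
    simp only [resN]
    refine resB_congr A τE τA w1 w2 w1' w2' i1 i2
      (take_eq_of_take_eq (by omega) ht1) (take_eq_of_take_eq (by omega) ht2) b h1 h2 _ _ ?_
    intro q h1' h2'
    have hgg : w1[i1]? = w1'[i1]? := getElem?_eq_of_take_eq (by omega) ht1
    rw [← hgg]
    cases hca : w1[i1]? with
    | none => rfl
    | some a =>
      refine ihn (A.delta q a) (i1 + 1) (i2 + 1) _ _ ?_ ?_
      · have e : i1 + 1 + n = i1 + (n + 1) := by omega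
        rw [e]
        exact ht1
      · have e : i2 + 1 + n = i2 + (n + 1) := by omega
        rw [e]
        exact ht2

/-! ### The canonical state reached on a word, and its properties -/

noncomputable def qfun (A : AFA Sig) (τE τA : List Sig → List (PB A.Q) → PB A.Q)
    (u : List Sig) : A.Q :=
  (resN A τE τA u u u.length (PB.atom A.init) 0 0
    [(0, PB.atom A.init)] [(0, PB.atom A.init)]).2.2

theorem main_mem (A : AFA Sig) (τE τA : List Sig → List (PB A.Q) → PB A.Q)
    (hE : ∀ u ∈ A.lang, (memGame A u).WinsEve (ffollow A u τE))
    (hA : ∀ u ∉ A.lang, (memGame A u).WinsAdam (ffollow A u τA))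
    (u : List Sig) : u ∈ A.lang ↔ qfun A τE τA u ∈ A.F := by
  have C := resN_spec A τE τA u u (hE u) (hA u) u.length u.length le_rfl le_rfl
      u.length (PB.atom A.init) 0 0 [(0, PB.atom A.init)] [(0, PB.atom A.init)]
      (by omega) (by omega) (by omega) (by omega)
      (fun j _ => rfl) (goodH_init A u) (goodH_init A u)
  set o := resN A τE τA u u u.length (PB.atom A.init) 0 0
      [(0, PB.atom A.init)] [(0, PB.atom A.init)] with ho
  constructor
  · intro hu
    have hag := C.2.2.1 hu (agreesE_singleton _ _ _)
    obtain ⟨l', hl'⟩ := List.getLast?_eq_some_iff.mp C.1.2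
    have hwin := (hE u hu).2 l' (u.length, PB.atom o.2.2) (hl' ▸ C.1.1) (hl' ▸ hag)
      (terminal_atom u o.2.2)
    exact hwin.2
  · intro hq
    by_contra hu
    have hag := C.2.2.2 hu (agreesA_singleton _ _ _)
    obtain ⟨l', hl'⟩ := List.getLast?_eq_some_iff.mp C.2.1.2
    have hwin := (hA u hu).2 l' (u.length, PB.atom o.2.2) (hl' ▸ C.2.1.1) (hl' ▸ hag)
      (terminal_atom u o.2.2)
    exact hwin ⟨rfl, hq⟩

theorem main_res (A : AFA Sig) (τE τA : List Sig → List (PB A.Q) → PB A.Q)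
    (hE : ∀ u ∈ A.lang, (memGame A u).WinsEve (ffollow A u τE))
    (hA : ∀ u ∉ A.lang, (memGame A u).WinsAdam (ffollow A u τA))
    (u u' v : List Sig) (hq : qfun A τE τA u = qfun A τE τA u')
    (hv : u ++ v ∈ A.lang) : u' ++ v ∈ A.lang := by
  by_contra hv'
  have C1 := resN_spec A τE τA (u ++ v) (u ++ v) (hE (u ++ v)) (hA (u ++ v))
      u.length u.length (by simp) (by simp) u.length (PB.atom A.init) 0 0
      [(0, PB.atom A.init)] [(0, PB.atom A.init)]
      (by omega) (by omega) (by omega) (by omega) (fun j _ => rfl)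
      (goodH_init A (u ++ v)) (goodH_init A (u ++ v))
  have C2 := resN_spec A τE τA (u' ++ v) (u' ++ v) (hE (u' ++ v)) (hA (u' ++ v))
      u'.length u'.length (by simp) (by simp) u'.length (PB.atom A.init) 0 0
      [(0, PB.atom A.init)] [(0, PB.atom A.init)]
      (by omega) (by omega) (by omega) (by omega) (fun j _ => rfl)
      (goodH_init A (u' ++ v)) (goodH_init A (u' ++ v))
  set o1 := resN A τE τA (u ++ v) (u ++ v) u.length (PB.atom A.init) 0 0
      [(0, PB.atom A.init)] [(0, PB.atom A.init)] with ho1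
  set o2 := resN A τE τA (u' ++ v) (u' ++ v) u'.length (PB.atom A.init) 0 0
      [(0, PB.atom A.init)] [(0, PB.atom A.init)] with ho2
  have e1 : o1 = resN A τE τA u u u.length (PB.atom A.init) 0 0
      [(0, PB.atom A.init)] [(0, PB.atom A.init)] := by
    rw [ho1]
    exact resN_congr A τE τA (u ++ v) (u ++ v) u u u.length (PB.atom A.init) 0 0 _ _
      (by simp) (by simp)
  have e2 : o2 = resN A τE τA u' u' u'.length (PB.atom A.init) 0 0
      [(0, PB.atom A.init)] [(0, PB.atom A.init)] := by
    rw [ho2]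
    exact resN_congr A τE τA (u' ++ v) (u' ++ v) u' u' u'.length (PB.atom A.init) 0 0 _ _
      (by simp) (by simp)
  have q1 : o1.2.2 = qfun A τE τA u := by rw [e1]; rfl
  have q2 : o2.2.2 = qfun A τE τA u' := by rw [e2]; rfl
  have q12 : o1.2.2 = o2.2.2 := by rw [q1, q2, hq]
  have g2' : GoodH A (u' ++ v) u'.length (PB.atom o1.2.2) o2.2.1 := by
    rw [q12]
    exact C2.2.1
  have C3 := resN_spec A τE τA (u ++ v) (u' ++ v) (hE (u ++ v)) (hA (u' ++ v))
      (u ++ v).length (u' ++ v).length le_rfl le_rfl v.length (PB.atom o1.2.2)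
      u.length u'.length o1.1 o2.2.1
      (by simp only [List.length_append]; omega) (by simp only [List.length_append]; omega)
      (by simp only [List.length_append]; omega) (by simp only [List.length_append]; omega)
      (fun j hj => by
        rw [List.getElem?_append_right (by omega), List.getElem?_append_right (by omega)]
        congr 1
        omega)
      C1.1 g2'
  set o3 := resN A τE τA (u ++ v) (u' ++ v) v.length (PB.atom o1.2.2)
      u.length u'.length o1.1 o2.2.1 with ho3
  have hagE := C3.2.2.1 hv (C1.2.2.1 hv (agreesE_singleton _ _ _))
  obtain ⟨l1, hl1⟩ := List.getLast?_eq_some_iff.mp C3.1.2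
  have hwinE := (hE _ hv).2 l1 ((u ++ v).length, PB.atom o3.2.2) (hl1 ▸ C3.1.1)
    (hl1 ▸ hagE) (terminal_atom (u ++ v) o3.2.2)
  have hagA := C3.2.2.2 hv' (C2.2.2.2 hv' (agreesA_singleton _ _ _))
  obtain ⟨l2, hl2⟩ := List.getLast?_eq_some_iff.mp C3.2.1.2
  have hwinA := (hA _ hv').2 l2 ((u' ++ v).length, PB.atom o3.2.2) (hl2 ▸ C3.2.1.1)
    (hl2 ▸ hagA) (terminal_atom (u' ++ v) o3.2.2)
  exact hwinA ⟨rfl, hwinE.2⟩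

/-! ### Semantics of deterministic automata -/

theorem dfa_accepts (D : AFA Sig) (f : D.Q → Sig → D.Q)
    (hf : ∀ q a, D.delta q a = PB.atom (f q a)) (u : List Sig) :
    D.Accepts u ↔ u.foldl f D.init ∈ D.F := by
  have hρ : ∀ (i : ℕ) (hi : i < u.length),
      (u.take (i + 1)).foldl f D.init = f ((u.take i).foldl f D.init) (u[i]'hi) := by
    intro i hi
    rw [List.take_succ, List.getElem?_eq_getElem hi, Option.toList_some, List.foldl_append,
      List.foldl_cons, List.foldl_nil]
  have hpos : ∀ (l : List (ℕ × PB D.Q)), (memGame D u).IsHist l →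
      ∀ i, i < l.length →
        i ≤ u.length ∧ l[i]? = some (i, PB.atom ((u.take i).foldl f D.init)) := by
    intro l hl i
    induction i with
    | zero =>
      intro hi
      refine ⟨Nat.zero_le _, ?_⟩
      have h0 : l[0]? = some (0, PB.atom D.init) := by
        rw [← List.head?_eq_getElem?]
        exact hl.1
      exact h0
    | succ i ih =>
      intro hi
      obtain ⟨hile, hgi⟩ := ih (by omega)
      have hi0 : i < l.length := by omega
      have hmv : (memGame D u).move (l[i]'hi0) (l[i + 1]'hi) := by
        have h2 := List.isChain_iff_getElem.mp hl.2 i (by omega)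
        exact h2
      have hgi' : l[i]'hi0 = (i, PB.atom ((u.take i).foldl f D.init)) := by
        rw [List.getElem?_eq_getElem hi0] at hgi
        exact Option.some.inj hgi
      rcases hx : l[i + 1]'hi with ⟨j, c⟩
      rw [hx, hgi'] at hmv
      obtain ⟨a, ha, hj, hc⟩ := hmv
      have hiu : i < u.length := by
        by_contra hgt
        rw [List.getElem?_eq_none (by omega)] at ha
        cases ha
      have hau : a = u[i]'hiu := by
        rw [List.getElem?_eq_getElem hiu] at ha
        injection ha with ha
        exact ha.symm
      refine ⟨by omega, ?_⟩
      rw [List.getElem?_eq_getElem hi, hx, hj, hc, hau, hf, hρ i hiu]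
  constructor
  · rintro ⟨σ, hσ⟩
    have hist : (memGame D u).IsHist
        ((List.range (u.length + 1)).map
          (fun k => (k, PB.atom ((u.take k).foldl f D.init)))) := by
      constructor
      · rw [List.range_succ_eq_map, List.map_cons]
        rfl
      · rw [List.Chain', List.isChain_map]
        rw [List.isChain_range_succ]
        intro m hm
        exact ⟨u[m]'hm, List.getElem?_eq_getElem hm, rfl, by rw [hf, hρ m hm]⟩
    have hagr : (memGame D u).AgreesE σ
        ((List.range (u.length + 1)).map
          (fun k => (k, PB.atom ((u.take k).foldl f D.init)))) := by
      intro i hi he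
      exfalso
      have hlen : i < u.length + 1 := by simpa using Nat.lt_of_succ_lt hi
      have hgi : ((List.range (u.length + 1)).map
          (fun k => (k, PB.atom ((u.take k).foldl f D.init))))[i]'(Nat.lt_of_succ_lt hi)
          = (i, PB.atom ((u.take i).foldl f D.init)) := by
        simp
      rw [hgi] at he
      exact he
    have hsplit : ((List.range (u.length + 1)).map
        (fun k => (k, PB.atom ((u.take k).foldl f D.init))))
        = ((List.range u.length).map
          (fun k => (k, PB.atom ((u.take k).foldl f D.init))))
          ++ [(u.length, PB.atom ((u.take u.length).foldl f D.init))] := by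
      rw [List.range_succ, List.map_append]
      rfl
    have hterm := hσ.2 ((List.range u.length).map
        (fun k => (k, PB.atom ((u.take k).foldl f D.init))))
        (u.length, PB.atom ((u.take u.length).foldl f D.init))
        (hsplit ▸ hist) (hsplit ▸ hagr)
        (terminal_atom u ((u.take u.length).foldl f D.init))
    have := hterm.2
    rwa [List.take_length] at this
  · intro hF
    refine ⟨fun _ => (0, PB.atom D.init), ?_, ?_⟩
    · intro l x hh hev _
      exfalso
      have hp0 := (hpos (l ++ [x]) hh l.length (by simp)).2
      rw [List.getElem?_concat_length] at hp0
      have hp := Option.some.inj hp0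
      rw [hp] at hev
      exact hev
    · intro l x hh _ hterm
      obtain ⟨hle, hp0⟩ := hpos (l ++ [x]) hh l.length (by simp)
      rw [List.getElem?_concat_length] at hp0
      have hp := Option.some.inj hp0
      have hlen : l.length = u.length := by
        by_contra hne
        have hlt : l.length < u.length := by omega
        exact hterm (l.length + 1, D.delta ((u.take l.length).foldl f D.init) (u[l.length]'hlt))
          (by rw [hp]; exact ⟨u[l.length]'hlt, List.getElem?_eq_getElem hlt, rfl, rfl⟩)
      rw [hp]
      exact ⟨hlen, by rw [hlen, List.take_length]; exact hF⟩

/-! ### Construction of the DFA -/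

noncomputable def repW (A : AFA Sig) (τE τA : List Sig → List (PB A.Q) → PB A.Q)
    (s : A.Q) : List Sig :=
  if hs : ∃ w, qfun A τE τA w = s then hs.choose else []

theorem qfun_repW (A : AFA Sig) (τE τA : List Sig → List (PB A.Q) → PB A.Q)
    (s : A.Q) (hs : ∃ w, qfun A τE τA w = s) :
    qfun A τE τA (repW A τE τA s) = s := by
  rw [repW, dif_pos hs]
  exact hs.choose_spec

noncomputable def stepD (A : AFA Sig) (τE τA : List Sig → List (PB A.Q) → PB A.Q)
    (s : A.Q) (a : Sig) : A.Q :=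
  qfun A τE τA (repW A τE τA s ++ [a])

noncomputable def theD (A : AFA Sig) (τE τA : List Sig → List (PB A.Q) → PB A.Q) :
    AFA Sig where
  Q := A.Q
  init := qfun A τE τA []
  delta := fun s a => PB.atom (stepD A τE τA s a)
  F := A.F

theorem runD (A : AFA Sig) (τE τA : List Sig → List (PB A.Q) → PB A.Q)
    (hE : ∀ u ∈ A.lang, (memGame A u).WinsEve (ffollow A u τE))
    (hA : ∀ u ∉ A.lang, (memGame A u).WinsAdam (ffollow A u τA)) :
    ∀ u : List Sig, ∃ w : List Sig,
      qfun A τE τA w = u.foldl (stepD A τE τA) (qfun A τE τA []) ∧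
      ∀ v, (w ++ v ∈ A.lang ↔ u ++ v ∈ A.lang) := by
  intro u
  induction u using List.reverseRecOn with
  | nil => exact ⟨[], rfl, fun v => Iff.rfl⟩
  | append_singleton u a ih =>
    obtain ⟨w, hw, hres⟩ := ih
    have hex : ∃ w', qfun A τE τA w' = u.foldl (stepD A τE τA) (qfun A τE τA []) := ⟨w, hw⟩
    refine ⟨repW A τE τA (u.foldl (stepD A τE τA) (qfun A τE τA [])) ++ [a], ?_, ?_⟩
    · rw [List.foldl_append]
      rfl
    · intro v
      have hq : qfun A τE τA (repW A τE τA (u.foldl (stepD A τE τA) (qfun A τE τA [])))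
          = qfun A τE τA w := by
        rw [qfun_repW A τE τA _ hex, hw]
      have h1 : ∀ v', (repW A τE τA (u.foldl (stepD A τE τA) (qfun A τE τA [])) ++ v' ∈ A.lang
          ↔ w ++ v' ∈ A.lang) := by
        intro v'
        constructor
        · exact main_res A τE τA hE hA _ w v' hq
        · exact main_res A τE τA hE hA w _ v' hq.symm
      calc repW A τE τA (u.foldl (stepD A τE τA) (qfun A τE τA [])) ++ [a] ++ v ∈ A.lang
          ↔ repW A τE τA (u.foldl (stepD A τE τA) (qfun A τE τA [])) ++ ([a] ++ v) ∈ A.lang := by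
            rw [List.append_assoc]
        _ ↔ w ++ ([a] ++ v) ∈ A.lang := h1 ([a] ++ v)
        _ ↔ u ++ ([a] ++ v) ∈ A.lang := hres ([a] ++ v)
        _ ↔ u ++ [a] ++ v ∈ A.lang := by rw [List.append_assoc]

end S13

end Statement13Proof

/-- For every GFG alternating automaton over finite words with `n` states
there is an equivalent DFA with at most `n` states. -/
theorem statement13 {Sig : Type} [Fintype Sig] [Nonempty Sig] (A : AFA Sig) (h : A.GFG) :
    ∃ D : AFA Sig, (∀ q a, (D.delta q a).IsAtom) ∧ Nat.card D.Q ≤ Nat.card A.Q ∧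
      D.lang = A.lang := by
  classical
  obtain ⟨⟨τE, hE⟩, ⟨τA, hA⟩⟩ := h
  refine ⟨S13.theD A τE τA, fun q a => trivial, le_of_eq rfl, ?_⟩
  ext u
  show (S13.theD A τE τA).Accepts u ↔ A.Accepts u
  rw [S13.dfa_accepts (S13.theD A τE τA) (S13.stepD A τE τA) (fun _ _ => rfl) u]
  obtain ⟨w, hw, hres⟩ := S13.runD A τE τA hE hA u
  show u.foldl (S13.stepD A τE τA) (S13.qfun A τE τA []) ∈ A.F ↔ A.Accepts u
  rw [← hw, ← S13.main_mem A τE τA hE hA w]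
  have := hres []
  have h2 : w ∈ A.lang ↔ u ∈ A.lang := by simpa using this
  exact h2

end GFG
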